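/- arXiv:2310.01737 — 2 statements merged into one kernel-verified Lean document; each statement's English description precedes it below -/
import Mathlib

section
/- Proposition 1 (pointwise form): the max⁺-following policy π° satisfies V^{π°}_t(s) ≥ f⁺_t(s) = max_{k∈[K]} V^{π^k}_t(s) for every 0 ≤ t ≤ H and every s ∈ S; in particular, following π° is at least as good as following any single policy in the extended oracle set. -/
open scoped BigOperators

/-- Expectation of a real-valued function under a probability mass function on a finite type. -/
noncomputable def pexp {α : Type*} [Fintype α] (p : PMF α) (f : α → ℝ) : ℝ :=
  ∑ a, (p a).toReal * f a

lemma pexp_mono {α : Type*} [Fintype α] (p : PMF α) (f g : α → ℝ)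
    (h : ∀ a, f a ≤ g a) : pexp p f ≤ pexp p g := by
  unfold pexp
  apply Finset.sum_le_sum
  intro a _
  exact mul_le_mul_of_nonneg_left (h a) ENNReal.toReal_nonneg

/-- Proposition 1 (pointwise form): the max⁺-following policy `π°` satisfies
`V^{π°}_t(s) ≥ f⁺_t(s) = max_{k∈[K]} V^{π^k}_t(s)` for every `0 ≤ t ≤ H` and every state `s`;
in particular, following `π°` is at least as good as following any single policy in the
extended oracle set. -/
theorem maxplus_following_value_dominance
    {S A : Type*} [Fintype S] [Nonempty S] [Fintype A] [Nonempty A]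
    (P : S → A → PMF S) (r : S → A → ℝ)
    (hr : ∀ s a, 0 ≤ r s a ∧ r s a ≤ 1)
    (H : ℕ)
    (K : ℕ) (hK : 1 ≤ K)
    (πs : Fin K → ℕ → S → PMF A)
    (Vs : Fin K → ℕ → S → ℝ)
    (hVsH : ∀ k s, Vs k H s = 0)
    (hVs : ∀ k t, t < H → ∀ s,
      Vs k t s = pexp (πs k t s) (fun a => r s a + pexp (P s a) (Vs k (t + 1))))
    (fplus : ℕ → S → ℝ)
    (hfplus : ∀ t s, fplus t s = ⨆ k : Fin K, Vs k t s)
    (kstar : ℕ → S → Fin K)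
    (hkstar : ∀ t s, Vs (kstar t s) t s = fplus t s)
    (Vo : ℕ → S → ℝ)
    (hVoH : ∀ s, Vo H s = 0)
    (hVo : ∀ t, t < H → ∀ s,
      Vo t s = pexp (πs (kstar t s) t s) (fun a => r s a + pexp (P s a) (Vo (t + 1)))) :
    ∀ t, t ≤ H → ∀ s, fplus t s ≤ Vo t s ∧ ∀ k : Fin K, Vs k t s ≤ Vo t s := by
  have hVsf : ∀ t s (k : Fin K), Vs k t s ≤ fplus t s := by
    intro t s k
    rw [hfplus]
    exact le_ciSup (f := fun k => Vs k t s) (Set.Finite.bddAbove (Set.finite_range _)) k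
  haveI : Nonempty (Fin K) := ⟨⟨0, hK⟩⟩
  have key : ∀ n t, t ≤ H → H - t ≤ n → ∀ s, fplus t s ≤ Vo t s := by
    intro n
    induction n with
    | zero =>
      intro t ht h0 s
      have : t = H := le_antisymm ht (Nat.le_of_sub_eq_zero (Nat.le_zero.mp h0))
      subst this
      rw [hVoH, hfplus]
      apply Real.iSup_le
      · intro k; rw [hVsH]
      · exact le_rfl
    | succ n ih =>
      intro t ht hn s
      rcases eq_or_lt_of_le ht with h | h
      · subst h
        rw [hVoH, hfplus]
        apply Real.iSup_le
        · intro k; rw [hVsH]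
        · exact le_rfl
      · have ht1 : t + 1 ≤ H := h
        have hn1 : H - (t + 1) ≤ n := by omega
        calc fplus t s = Vs (kstar t s) t s := (hkstar t s).symm
          _ = pexp (πs (kstar t s) t s)
              (fun a => r s a + pexp (P s a) (Vs (kstar t s) (t + 1))) := hVs _ t h s
          _ ≤ pexp (πs (kstar t s) t s)
              (fun a => r s a + pexp (P s a) (Vo (t + 1))) := by
            apply pexp_mono
            intro a
            apply add_le_add le_rfl
            apply pexp_mono
            intro s'
            exact le_trans (hVsf (t + 1) s' _) (ih (t + 1) ht1 hn1 s')
          _ = Vo t s := (hVo t h s).symm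
  intro t ht s
  have h1 : fplus t s ≤ Vo t s := key (H - t) t ht le_rfl s
  exact ⟨h1, fun k => le_trans (hVsf t s k) h1⟩
end

section
/- Proposition 2 (performance lower bound, deterministic form): in the setting of the regret decomposition identity, max_{n∈[N]} E_{s∼d_0}[ V^{π_n}_0(s) ] ≥ E_{s∼d_0}[ f_0(s) ] + Δ_N − ε_N(Π) − Regret_N, where f is any time-indexed baseline with f_H ≡ 0, and Δ_N, ε_N(Π), Regret_N are defined from the losses ℓ_n(π) := −Σ_{t=0}^{H−1} E_{s∼d^{π_n}_t}[ A^f_t(s, π) ] as Δ_N := −(1/N) Σ_n ℓ_n(π⊕), ε_N(Π) := min_{π∈Π} (1/N) Σ_n ( ℓ_n(π) − ℓ_n(π⊕) ), Regret_N := (1/N) ( Σ_n ℓ_n(π_n) − min_{π∈Π} Σ_n ℓ_n(π) ). -/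
open scoped BigOperators

lemma pexp_sum_one {α : Type*} [Fintype α] (p : PMF α) : ∑ a, (p a).toReal = 1 := by
  have h := p.tsum_coe
  rw [tsum_fintype] at h
  rw [← ENNReal.toReal_sum (fun a _ => PMF.apply_ne_top p a), h, ENNReal.toReal_one]

lemma pexp_const {α : Type*} [Fintype α] (p : PMF α) (c : ℝ) : pexp p (fun _ => c) = c := by
  simp [pexp, ← Finset.sum_mul, pexp_sum_one]

lemma pexp_add {α : Type*} [Fintype α] (p : PMF α) (g h : α → ℝ) :
    pexp p (fun a => g a + h a) = pexp p g + pexp p h := by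
  simp [pexp, mul_add, Finset.sum_add_distrib]

lemma pexp_sub {α : Type*} [Fintype α] (p : PMF α) (g h : α → ℝ) :
    pexp p (fun a => g a - h a) = pexp p g - pexp p h := by
  simp [pexp, mul_sub, Finset.sum_sub_distrib]

lemma pexp_congr {α : Type*} [Fintype α] (p : PMF α) (g h : α → ℝ)
    (hgh : ∀ a, g a = h a) : pexp p g = pexp p h := by
  unfold pexp; exact Finset.sum_congr rfl fun a _ => by rw [hgh a]

lemma pexp_bind {α β : Type*} [Fintype α] [Fintype β] (p : PMF α) (q : α → PMF β) (g : β → ℝ) :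
    pexp (p.bind q) g = pexp p (fun a => pexp (q a) g) := by
  simp only [pexp, PMF.bind_apply, tsum_fintype]
  have h1 : ∀ b, ((∑ a, p a * q a b)).toReal = ∑ a, (p a).toReal * (q a b).toReal := by
    intro b
    rw [ENNReal.toReal_sum (fun a _ => ENNReal.mul_ne_top (PMF.apply_ne_top p a) (PMF.apply_ne_top (q a) b))]
    simp [ENNReal.toReal_mul]
  simp_rw [h1, Finset.sum_mul, Finset.mul_sum, mul_assoc]
  rw [Finset.sum_comm]

/-- Proposition 2 (performance lower bound, deterministic form): in the setting of the
regret decomposition identity,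
`max_{n∈[N]} E_{s∼d₀}[ V^{π_n}_0(s) ] ≥ E_{s∼d₀}[ f_0(s) ] + Δ_N − ε_N(Π) − Regret_N`,
where `ℓ_n(π) := −Σ_{t=0}^{H−1} E_{s∼d^{π_n}_t}[ A^f_t(s, π) ]`,
`Δ_N := −(1/N) Σ_n ℓ_n(π⊕)`, `ε_N(Π) := min_{π∈Π} (1/N) Σ_n (ℓ_n(π) − ℓ_n(π⊕))`, and
`Regret_N := (1/N)(Σ_n ℓ_n(π_n) − min_{π∈Π} Σ_n ℓ_n(π))`. -/
theorem performance_lower_bound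
    {S A : Type*} [Fintype S] [Nonempty S] [Fintype A] [Nonempty A]
    (P : S → A → PMF S) (r : S → A → ℝ)
    (hr : ∀ s a, 0 ≤ r s a ∧ r s a ≤ 1)
    (H : ℕ)
    (f : ℕ → S → ℝ)
    (hfH : ∀ s, f H s = 0)
    (πagg : ℕ → S → PMF A)
    (Pi : Finset (ℕ → S → PMF A)) (hne : Pi.Nonempty)
    (N : ℕ) (hN : 0 < N)
    (πn : Fin N → ℕ → S → PMF A)
    (Vn : Fin N → ℕ → S → ℝ)
    (hVnH : ∀ n s, Vn n H s = 0)
    (hVn : ∀ n t, t < H → ∀ s,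
      Vn n t s = pexp (πn n t s) (fun a => r s a + pexp (P s a) (Vn n (t + 1))))
    (d₀ : PMF S)
    (d : Fin N → ℕ → PMF S)
    (hd0 : ∀ n, d n 0 = d₀)
    (hd : ∀ n t, d n (t + 1) = (d n t).bind fun s => (πn n t s).bind fun a => P s a)
    (loss : Fin N → (ℕ → S → PMF A) → ℝ)
    (hloss : ∀ n π, loss n π =
      -∑ t ∈ Finset.range H,
        pexp (d n t) (fun s =>
          pexp (π t s) (fun a => r s a + pexp (P s a) (f (t + 1)) - f t s))) :
    pexp d₀ (fun s => f 0 s)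
        + (-(1 / (N : ℝ)) * ∑ n, loss n πagg)
        - Pi.inf' hne (fun π => (1 / (N : ℝ)) * ∑ n, (loss n π - loss n πagg))
        - (1 / (N : ℝ)) * ((∑ n, loss n (πn n)) - Pi.inf' hne (fun π => ∑ n, loss n π)) ≤
      ⨆ n : Fin N, pexp d₀ (fun s => Vn n 0 s) := by
  classical
  haveI : Nonempty (Fin N) := ⟨⟨0, hN⟩⟩
  have hNne : (N : ℝ) ≠ 0 := Nat.cast_ne_zero.mpr hN.ne'
  -- key per-policy identity
  have key : ∀ n : Fin N, loss n (πn n)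
      = pexp d₀ (fun s => f 0 s) - pexp d₀ (fun s => Vn n 0 s) := by
    intro n
    set Sm : ℕ → ℝ := fun t => pexp (d n t) (fun s =>
      pexp (πn n t s) (fun a => r s a + pexp (P s a) (f (t + 1)) - f t s)) with hSm
    set G : ℕ → ℝ := fun t => pexp (d n t) (fun s => Vn n t s) with hG
    set F : ℕ → ℝ := fun t => pexp (d n t) (fun s => f t s) with hF
    have step : ∀ t, t < H → Sm t = G t - G (t + 1) + (F (t + 1) - F t) := by
      intro t ht
      have e1 : G t = pexp (d n t) (fun s =>
          pexp (πn n t s) (fun a => r s a + pexp (P s a) (Vn n (t + 1)))) := by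
        simp only [hG]
        exact pexp_congr _ _ _ fun s => hVn n t ht s
      have e2 : G (t + 1) = pexp (d n t) (fun s =>
          pexp (πn n t s) (fun a => pexp (P s a) (fun s' => Vn n (t + 1) s'))) := by
        simp only [hG]
        rw [hd n t, pexp_bind]
        simp only [pexp_bind]
      have e3 : F (t + 1) = pexp (d n t) (fun s =>
          pexp (πn n t s) (fun a => pexp (P s a) (fun s' => f (t + 1) s'))) := by
        simp only [hF]
        rw [hd n t, pexp_bind]
        simp only [pexp_bind]
      have e4 : ∀ s, pexp (πn n t s) (fun a => r s a + pexp (P s a) (f (t + 1)) - f t s)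
          = pexp (πn n t s) (fun a => r s a + pexp (P s a) (Vn n (t + 1)))
            - pexp (πn n t s) (fun a => pexp (P s a) (fun s' => Vn n (t + 1) s'))
            + (pexp (πn n t s) (fun a => pexp (P s a) (fun s' => f (t + 1) s')) - f t s) := by
        intro s
        have h0 : (fun a => r s a + pexp (P s a) (f (t + 1)) - f t s)
            = fun a => ((r s a + pexp (P s a) (Vn n (t + 1)))
                - pexp (P s a) (fun s' => Vn n (t + 1) s'))
              + (pexp (P s a) (fun s' => f (t + 1) s') - f t s) := by
          funext a; ring
        rw [h0, pexp_add, pexp_sub, pexp_sub, pexp_const]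
      have e5 : Sm t = pexp (d n t) (fun s =>
          (pexp (πn n t s) (fun a => r s a + pexp (P s a) (Vn n (t + 1)))
            - pexp (πn n t s) (fun a => pexp (P s a) (fun s' => Vn n (t + 1) s')))
          + (pexp (πn n t s) (fun a => pexp (P s a) (fun s' => f (t + 1) s')) - f t s)) := by
        simp only [hSm]
        exact pexp_congr _ _ _ e4
      rw [e5, pexp_add, pexp_sub, pexp_sub, e1, e2, e3]
    have GH0 : G H = 0 := by simp [hG, pexp, hVnH]
    have FH0 : F H = 0 := by simp [hF, pexp, hfH]
    have tele : ∀ j, j ≤ H → ∑ u ∈ Finset.Ico (H - j) H, Sm u = G (H - j) - F (H - j) := by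
      intro j
      induction j with
      | zero => intro _; simp [GH0, FH0]
      | succ k ih =>
        intro hk
        have hk' : k ≤ H := Nat.le_of_succ_le hk
        have ht : H - (k + 1) < H := Nat.sub_lt (Nat.lt_of_lt_of_le (Nat.succ_pos k) hk) (Nat.succ_pos k)
        have hsucc : H - (k + 1) + 1 = H - k := by omega
        rw [Finset.sum_eq_sum_Ico_succ_bot ht, hsucc, ih hk', step _ ht, hsucc]
        ring
    have hsum : ∑ t ∈ Finset.range H, Sm t = G 0 - F 0 := by
      have h := tele H le_rfl
      rw [Nat.sub_self] at h
      rw [Finset.range_eq_Ico]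
      exact h
    have hG0 : G 0 = pexp d₀ (fun s => Vn n 0 s) := by simp only [hG]; rw [hd0 n]
    have hF0 : F 0 = pexp d₀ (fun s => f 0 s) := by simp only [hF]; rw [hd0 n]
    rw [hloss n (πn n)]
    have : ∑ t ∈ Finset.range H,
        pexp (d n t) (fun s =>
          pexp (πn n t s) (fun a => r s a + pexp (P s a) (f (t + 1)) - f t s)) = G 0 - F 0 := hsum
    rw [this, hG0, hF0]
    ring
  -- average identity
  have havg : pexp d₀ (fun s => f 0 s) - (1 / (N : ℝ)) * ∑ n, loss n (πn n)
      = (1 / (N : ℝ)) * ∑ n : Fin N, pexp d₀ (fun s => Vn n 0 s) := by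
    have h1 : ∑ n : Fin N, loss n (πn n)
        = ∑ n : Fin N, (pexp d₀ (fun s => f 0 s) - pexp d₀ (fun s => Vn n 0 s)) :=
      Finset.sum_congr rfl fun n _ => key n
    rw [h1, Finset.sum_sub_distrib, Finset.sum_const, Finset.card_univ, Fintype.card_fin]
    field_simp
    ring
  -- average ≤ sup
  have hsup : (1 / (N : ℝ)) * ∑ n : Fin N, pexp d₀ (fun s => Vn n 0 s)
      ≤ ⨆ n : Fin N, pexp d₀ (fun s => Vn n 0 s) := by
    have hb : ∀ n : Fin N, pexp d₀ (fun s => Vn n 0 s)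
        ≤ ⨆ m : Fin N, pexp d₀ (fun s => Vn m 0 s) :=
      fun n => le_ciSup (f := fun m : Fin N => pexp d₀ (fun s => Vn m 0 s))
        (Set.Finite.bddAbove (Set.finite_range _)) n
    have h2 : ∑ n : Fin N, pexp d₀ (fun s => Vn n 0 s)
        ≤ (N : ℝ) * ⨆ m : Fin N, pexp d₀ (fun s => Vn m 0 s) := by
      calc ∑ n : Fin N, pexp d₀ (fun s => Vn n 0 s)
          ≤ ∑ _n : Fin N, ⨆ m : Fin N, pexp d₀ (fun s => Vn m 0 s) :=
            Finset.sum_le_sum fun n _ => hb n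
        _ = (N : ℝ) * ⨆ m : Fin N, pexp d₀ (fun s => Vn m 0 s) := by
            rw [Finset.sum_const, Finset.card_univ, Fintype.card_fin, nsmul_eq_mul]
    calc (1 / (N : ℝ)) * ∑ n : Fin N, pexp d₀ (fun s => Vn n 0 s)
        ≤ (1 / (N : ℝ)) * ((N : ℝ) * ⨆ m : Fin N, pexp d₀ (fun s => Vn m 0 s)) := by
          apply mul_le_mul_of_nonneg_left h2
          positivity
      _ = ⨆ m : Fin N, pexp d₀ (fun s => Vn m 0 s) := by field_simp
  -- inf bound
  have hinf : (1 / (N : ℝ)) * ((Pi.inf' hne fun π => ∑ n, loss n π) - ∑ n, loss n πagg)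
      ≤ Pi.inf' hne (fun π => (1 / (N : ℝ)) * ∑ n, (loss n π - loss n πagg)) := by
    apply Finset.le_inf'
    intro π hπ
    have h1 : (Pi.inf' hne fun π => ∑ n, loss n π) ≤ ∑ n, loss n π :=
      Finset.inf'_le _ hπ
    have h2 : ∑ n, (loss n π - loss n πagg) = (∑ n, loss n π) - ∑ n, loss n πagg :=
      Finset.sum_sub_distrib _ _
    rw [h2]
    apply mul_le_mul_of_nonneg_left _ (by positivity)
    linarith
  linarith [hinf, hsup, havg]
end
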